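/- arXiv:2007.15040 — 5 statements merged into one kernel-verified Lean document; each statement's English description precedes it below -/
import Mathlib

section
/- In the gradient computational graph, the weight of a nonlinear arc (j, ī) is c^{ī}_j = Σ_{k : i≺k and j≺k} v̄_k ∂²v_k/(∂v_j ∂v_i), and consequently (by symmetry of second derivatives of C² functions) c^{ī}_j = c^{j̄}_i for all j ≠ i. -/
/-- Second partial derivative ∂²g/∂x_j∂x_k. -/
noncomputable def H2 {n : ℕ} (g : (Fin n → ℝ) → ℝ) (x : Fin n → ℝ) (j k : Fin n) : ℝ :=
  fderiv ℝ (fun y => fderiv ℝ g y (Pi.single k 1)) x (Pi.single j 1)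

lemma H2_symm {n : ℕ} {g : (Fin n → ℝ) → ℝ} (hg : ContDiff ℝ 2 g)
    (x : Fin n → ℝ) (j k : Fin n) : H2 g x j k = H2 g x k j := by
  have hdiff : DifferentiableAt ℝ (fderiv ℝ g) x :=
    ((hg.fderiv_right (m := 1) le_rfl).differentiable one_ne_zero).differentiableAt
  have h : ∀ v : Fin n → ℝ, fderiv ℝ (fun y => fderiv ℝ g y v) x
      = (fderiv ℝ (fderiv ℝ g) x).flip v := by
    intro v
    have := fderiv_clm_apply (c := fderiv ℝ g) (u := fun _ => v) hdiff
      (differentiableAt_const v)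
    simpa using this
  have hsym : IsSymmSndFDerivAt ℝ g x :=
    hg.contDiffAt.isSymmSndFDerivAt (by simp only [minSmoothness_of_isRCLikeNormedField]; norm_cast)
  simp only [H2, h]
  exact hsym _ _
lemma H2_zero {n : ℕ} {g : (Fin n → ℝ) → ℝ} (hg : ContDiff ℝ 2 g)
    (x : Fin n → ℝ) (j k : Fin n)
    (h0 : ∀ y, fderiv ℝ g y (Pi.single k 1) = 0) : H2 g x j k = 0 := by
  unfold H2
  simp only [h0]
  simp [fderiv_const]

/-- the weight of the nonlinear arc (j, ī),
c^{ī}_j = Σ_{k : i≺k} v̄_k ∂²φ_k/∂v_j∂v_i, restricts to the common successors of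
i and j, and is symmetric: c^{ī}_j = c^{j̄}_i for j ≠ i.  Here `A j k` means
j ≺ k (φ_k depends on v_j), and partials of φ_k w.r.t. non-predecessors vanish. -/
theorem nonlinear_arc_weight_symmetry (N : ℕ)
    (A : Fin N → Fin N → Prop) [DecidableRel A]
    (φ : Fin N → (Fin N → ℝ) → ℝ)
    (hC : ∀ k, ContDiff ℝ 2 (φ k))
    (hdep : ∀ k j, ¬ A j k → ∀ w, fderiv ℝ (φ k) w (Pi.single j 1) = 0)
    (vbar : Fin N → ℝ) (w : Fin N → ℝ)
    (c : Fin N → Fin N → ℝ)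
    (hc : ∀ i j, c i j = ∑ k ∈ Finset.univ.filter (fun k => A i k),
        vbar k * H2 (φ k) w j i) :
    (∀ i j, c i j = ∑ k ∈ Finset.univ.filter (fun k => A i k ∧ A j k),
        vbar k * H2 (φ k) w j i)
    ∧ ∀ i j, i ≠ j → c i j = c j i := by
  have key : ∀ i j, c i j = ∑ k ∈ Finset.univ.filter (fun k => A i k ∧ A j k),
      vbar k * H2 (φ k) w j i := by
    intro i j
    rw [hc i j]
    refine (Finset.sum_subset ?_ ?_).symm
    · intro k hk
      simp only [Finset.mem_filter] at *
      exact ⟨hk.1, hk.2.1⟩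
    · intro k hk hk'
      simp only [Finset.mem_filter, Finset.mem_univ, true_and, not_and] at hk hk'
      have hj : ¬ A j k := hk' hk
      have : H2 (φ k) w j i = 0 := by
        rw [H2_symm (hC k)]
        exact H2_zero (hC k) w i j (hdep k j hj)
      simp [this]
  refine ⟨key, fun i j _ => ?_⟩
  rw [key i j, key j i]
  apply Finset.sum_congr
  · ext k; simp [and_comm]
  · intro k _
    rw [H2_symm (hC k)]
end

section
/- For i, j ∈ {1−n,…,0}, the second partial derivative satisfies ∂²f/(∂x_i ∂x_j) = Σ over nonlinear arcs (r, s̄) of [ (Σ over directed paths p from i to r of weight(p)) · c^{s̄}_r · (Σ over directed paths q from j to s of weight(q)) ], where path weights in the original computational graph G use arc weights c^k_m = ∂φ_k/∂v_m. -/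
/-- Forward evaluation of the computational graph: `runFrom Nn φ t s w`
recomputes, in order, the values of nodes t, t+1, …, t+s-1. -/
noncomputable def runFrom (Nn : ℕ) (φ : Fin Nn → (Fin Nn → ℝ) → ℝ) :
    ℕ → ℕ → (Fin Nn → ℝ) → (Fin Nn → ℝ)
  | _, 0, w => w
  | t, s+1, w =>
    let w' := runFrom Nn φ t s w
    if h : t + s < Nn then Function.update w' ⟨t + s, h⟩ (φ ⟨t + s, h⟩ w') else w'

/-- Weight of a path (a list of nodes): product of the weights c of its
consecutive arcs, where `c k m` is the weight of arc (m,k), i.e. ∂φ_k/∂v_m. -/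
noncomputable def pathWeight {V : Type*} (c : V → V → ℝ) (l : List V) : ℝ :=
  ((l.zip l.tail).map (fun q => c q.2 q.1)).prod

set_option linter.unusedSectionVars false
set_option maxHeartbeats 1000000



section Comb

set_option linter.unusedSectionVars false
variable {N : ℕ} (A : Fin N → Fin N → Prop) [DecidableRel A] (c : Fin N → Fin N → ℝ)

def pathSet (a b : Fin N) : Set (List (Fin N)) :=
  {l | l.Chain' A ∧ l.head? = some a ∧ l.getLast? = some b}

lemma pathSet_finite (hA : ∀ j k, A j k → j < k) (a b : Fin N) : (pathSet A a b).Finite := by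
  apply (List.finite_length_le (Fin N) N).subset
  intro l hl
  have h1 : l.Chain' (· < ·) := hl.1.imp (fun {x y} h => hA x y h)
  have : l.Nodup := (List.isChain_iff_pairwise.mp h1).nodup
  simpa using this.length_le_card

lemma pathWeight_nil : pathWeight c [] = 1 := rfl
lemma pathWeight_singleton (a : Fin N) : pathWeight c [a] = 1 := rfl
lemma pathWeight_cons_cons (x y : Fin N) (t : List (Fin N)) :
    pathWeight c (x :: y :: t) = c y x * pathWeight c (y :: t) := by
  simp [pathWeight]

lemma pathWeight_concat (l : List (Fin N)) (m b : Fin N) (h : l.getLast? = some m) :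
    pathWeight c (l ++ [b]) = pathWeight c l * c b m := by
  induction l with
  | nil => simp at h
  | cons x t ih =>
    match t with
    | [] =>
      simp at h
      subst h
      simp [pathWeight_cons_cons, pathWeight_singleton]
    | y :: t' =>
      have h' : (y :: t').getLast? = some m := by
        rwa [List.getLast?_cons_cons] at h
      have := ih h'
      simp only [List.cons_append] at this ⊢
      rw [pathWeight_cons_cons, pathWeight_cons_cons c x y t', this]
      ring

end Comb

section Rec

variable {N : ℕ} (A : Fin N → Fin N → Prop) [DecidableRel A] (c : Fin N → Fin N → ℝ)
variable (hA : ∀ j k, A j k → j < k)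

noncomputable def pathsSum (a b : Fin N) : ℝ :=
  ∑ l ∈ (pathSet_finite A hA a b).toFinset, pathWeight c l

lemma mem_pathFinset {a b : Fin N} {l : List (Fin N)} :
    l ∈ (pathSet_finite A hA a b).toFinset ↔
      l.Chain' A ∧ l.head? = some a ∧ l.getLast? = some b := by
  rw [Set.Finite.mem_toFinset]; exact Iff.rfl

lemma pathsSum_rec (a b : Fin N) :
    pathsSum A c hA a b = (if a = b then 1 else 0)
      + ∑ m ∈ Finset.univ.filter (fun m => A m b), pathsSum A c hA a m * c b m := by
  unfold pathsSum
  rw [← Finset.sum_filter_add_sum_filter_not ((pathSet_finite A hA a b).toFinset)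
    (fun l => l.length = 1)]
  congr 1
  · -- length-one paths
    by_cases hab : a = b
    · subst hab
      rw [if_pos rfl]
      have : ((pathSet_finite A hA a a).toFinset.filter (fun l => l.length = 1)) = {[a]} := by
        ext l
        rw [Finset.mem_filter, mem_pathFinset A hA, Finset.mem_singleton]
        constructor
        · rintro ⟨⟨_, h1, h2⟩, hlen⟩
          match l, hlen with
          | [q], _ => simp_all
        · rintro rfl; refine ⟨⟨List.isChain_singleton a, by simp, by simp⟩, by simp⟩
      rw [this, Finset.sum_singleton, pathWeight_singleton]
    · rw [if_neg hab]
      apply Finset.sum_eq_zero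
      intro l hl
      exfalso
      rw [Finset.mem_filter, mem_pathFinset A hA] at hl
      obtain ⟨⟨_, h1, h2⟩, hlen⟩ := hl
      match l, hlen with
      | [q], _ =>
        simp only [List.head?_cons, Option.some.injEq] at h1
        simp only [List.getLast?_singleton, Option.some.injEq] at h2
        exact hab (h1.symm.trans h2)
  · -- longer paths: strip the last arc
    have key : ∑ l ∈ ((pathSet_finite A hA a b).toFinset.filter (fun l => ¬ l.length = 1)),
        pathWeight c l
        = ∑ p ∈ ((Finset.univ.filter (fun m => A m b)).sigma
            (fun m => (pathSet_finite A hA a m).toFinset)),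
          pathWeight c p.2 * c b p.1 := by
      refine Finset.sum_nbij'
        (fun l => (⟨(l.dropLast.getLast?).getD b, l.dropLast⟩ : Σ _ : Fin N, List (Fin N)))
        (fun p => p.2 ++ [b]) ?_ ?_ ?_ ?_ ?_
      · -- i maps into sigma set
        intro l hl
        rw [Finset.mem_filter, mem_pathFinset A hA] at hl
        obtain ⟨⟨hch, hhd, hlst⟩, hlen⟩ := hl
        have hne : l ≠ [] := by rintro rfl; simp at hhd
        have hlen2 : 2 ≤ l.length := by
          have h0 : l.length ≠ 0 := by simpa using (List.length_pos_iff.mpr hne).ne'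
          omega
        have hdne : l.dropLast ≠ [] := by
          rw [← List.length_pos_iff, List.length_dropLast]; omega
        have hb : l.getLast hne = b := by
          simpa [List.getLast?_eq_getLast hne] using hlst
        have hdec : l.dropLast ++ [b] = l := by
          conv_rhs => rw [← List.dropLast_append_getLast hne]
          rw [hb]
        set m := l.dropLast.getLast hdne with hm
        have hml : l.dropLast.getLast? = some m := List.getLast?_eq_getLast hdne
        have hch' : l.dropLast.Chain' A ∧ A m b := by
          have : List.IsChain A l := hch
          rw [← hdec, List.isChain_append] at this
          exact ⟨this.1, this.2.2 m (by rw [hml]; rfl) b rfl⟩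
        have hhd' : l.dropLast.head? = some a := by
          rw [← hdec, List.head?_append] at hhd
          match hd : l.dropLast.head? with
          | some z => rw [hd] at hhd; simpa using hhd
          | none => exact absurd (List.head?_eq_none_iff.mp hd) hdne
        rw [Finset.mem_sigma]
        constructor
        · simp only [Finset.mem_filter, Finset.mem_univ, true_and, hml, Option.getD_some]
          exact hch'.2
        · show l.dropLast ∈ (pathSet_finite A hA a _).toFinset
          rw [mem_pathFinset A hA]
          refine ⟨hch'.1, hhd', ?_⟩
          simp only [hml, Option.getD_some]
      · -- j maps into filter set
        rintro ⟨m, l⟩ hp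
        rw [Finset.mem_sigma, Finset.mem_filter, mem_pathFinset A hA] at hp
        obtain ⟨⟨-, hmb⟩, hch, hhd, hlst⟩ := hp
        dsimp only at hmb hch hhd hlst ⊢
        have hne : l ≠ [] := by rintro rfl; simp at hhd
        rw [Finset.mem_filter, mem_pathFinset A hA]
        refine ⟨⟨?_, ?_, ?_⟩, ?_⟩
        · refine List.isChain_append.mpr ?_
          exact ⟨hch, List.isChain_singleton b, fun x hx y hy => by
            rw [hlst] at hx
            simp only [Option.mem_def, Option.some.injEq, List.head?_cons] at hx hy
            subst hx; rw [← hy]; exact hmb⟩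
        · show (l ++ [b]).head? = some a
          rw [List.head?_append]
          match hd : l.head? with
          | some z => rw [hd] at hhd; simpa using hhd
          | none => exact absurd (List.head?_eq_none_iff.mp hd) hne
        · exact List.getLast?_concat
        · simp only [List.length_append, List.length_singleton]
          have : l.length ≠ 0 := by simpa using (List.length_pos_iff.mpr hne).ne'
          omega
      · -- j ∘ i = id
        intro l hl
        rw [Finset.mem_filter, mem_pathFinset A hA] at hl
        obtain ⟨⟨hch, hhd, hlst⟩, hlen⟩ := hl
        have hne : l ≠ [] := by rintro rfl; simp at hhd
        have hlen2 : 2 ≤ l.length := by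
          have h0 : l.length ≠ 0 := by simpa using (List.length_pos_iff.mpr hne).ne'
          omega
        have hdne : l.dropLast ≠ [] := by
          rw [← List.length_pos_iff, List.length_dropLast]; omega
        have hb : l.getLast hne = b := by
          simpa [List.getLast?_eq_getLast hne] using hlst
        have hdec : l.dropLast ++ [b] = l := by
          conv_rhs => rw [← List.dropLast_append_getLast hne]
          rw [hb]
        show (⟨(l.dropLast.getLast?).getD b, l.dropLast⟩ : Σ _ : Fin N, List (Fin N)).2 ++ [b] = l
        exact hdec
      · -- i ∘ j = id
        rintro ⟨m, l⟩ hp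
        rw [Finset.mem_sigma, Finset.mem_filter, mem_pathFinset A hA] at hp
        obtain ⟨⟨-, hmb⟩, hch, hhd, hlst⟩ := hp
        dsimp only at hmb hch hhd hlst
        show (⟨((l ++ [b]).dropLast.getLast?).getD b, (l ++ [b]).dropLast⟩ :
            Σ _ : Fin N, List (Fin N)) = ⟨m, l⟩
        rw [List.dropLast_concat, hlst]
        rfl
      · -- weights
        intro l hl
        rw [Finset.mem_filter, mem_pathFinset A hA] at hl
        obtain ⟨⟨hch, hhd, hlst⟩, hlen⟩ := hl
        have hne : l ≠ [] := by rintro rfl; simp at hhd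
        have hlen2 : 2 ≤ l.length := by
          have h0 : l.length ≠ 0 := by simpa using (List.length_pos_iff.mpr hne).ne'
          omega
        have hdne : l.dropLast ≠ [] := by
          rw [← List.length_pos_iff, List.length_dropLast]; omega
        have hb : l.getLast hne = b := by
          simpa [List.getLast?_eq_getLast hne] using hlst
        have hdec : l.dropLast ++ [b] = l := by
          conv_rhs => rw [← List.dropLast_append_getLast hne]
          rw [hb]
        have hml : l.dropLast.getLast? = some (l.dropLast.getLast hdne) :=
          List.getLast?_eq_getLast hdne
        show pathWeight c l = pathWeight c l.dropLast * c b ((l.dropLast.getLast?).getD b)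
        conv_lhs => rw [← hdec]
        rw [pathWeight_concat c l.dropLast (l.dropLast.getLast hdne) b hml]
        simp only [hml, Option.getD_some]
    rw [key, Finset.sum_sigma]
    refine Finset.sum_congr rfl (fun m _ => ?_)
    rw [Finset.sum_mul]

end Rec


section Analysis

variable {N : ℕ}

/-- If a C¹ function has vanishing partial in direction m, it is invariant
under updating coordinate m. -/
lemma update_invariant (ψ : (Fin N → ℝ) → ℝ) (hψ : Differentiable ℝ ψ) (m : Fin N)
    (h0 : ∀ w, fderiv ℝ ψ w (Pi.single m 1) = 0) (w : Fin N → ℝ) (t : ℝ) :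
    ψ (Function.update w m t) = ψ w := by
  have hα : ∀ t : ℝ, Function.update w m t = w + (t - w m) • (Pi.single m 1 : Fin N → ℝ) := by
    intro t
    funext q
    by_cases hq : q = m
    · subst hq; simp
    · simp [Function.update_apply, hq, Pi.single_apply]
  have hg : ∀ s : ℝ, HasDerivAt (fun t : ℝ => ψ (Function.update w m t))
      (fderiv ℝ ψ (Function.update w m s) (Pi.single m 1)) s := by
    intro s
    have hα' : HasDerivAt (fun t : ℝ => w + (t - w m) • (Pi.single m 1 : Fin N → ℝ))
        ((Pi.single m 1 : Fin N → ℝ)) s := by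
      have h1 : HasDerivAt (fun t : ℝ => t - w m) 1 s := (hasDerivAt_id s).sub_const _
      have h2 := h1.smul_const (Pi.single m 1 : Fin N → ℝ)
      have h3 := h2.const_add w
      simpa using h3
    have h4 : HasDerivAt (fun t : ℝ => Function.update w m t)
        ((Pi.single m 1 : Fin N → ℝ)) s := by
      simp only [hα]; exact hα'
    exact ((hψ _).hasFDerivAt).comp_hasDerivAt s h4
  have hconst : ∀ s₁ s₂ : ℝ, ψ (Function.update w m s₁) = ψ (Function.update w m s₂) := by
    intro s₁ s₂
    apply is_const_of_deriv_eq_zero (f := fun t : ℝ => ψ (Function.update w m t))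
    · intro s; exact (hg s).differentiableAt
    · intro s; rw [(hg s).deriv, h0]
  rw [hconst t (w m), Function.update_eq_self]

/-- A C¹ function whose partials vanish off Q only depends on coordinates in Q. -/
lemma agree_invariant (ψ : (Fin N → ℝ) → ℝ) (hψ : Differentiable ℝ ψ) (Q : Fin N → Prop)
    (h0 : ∀ m, ¬ Q m → ∀ w, fderiv ℝ ψ w (Pi.single m 1) = 0)
    (w w' : Fin N → ℝ) (hag : ∀ m, Q m → w m = w' m) :
    ψ w = ψ w' := by
  classical
  have key : ∀ s : Finset (Fin N), ψ (fun q => if q ∈ s then w' q else w q) = ψ w := by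
    intro s
    induction s using Finset.induction_on with
    | empty => simp
    | @insert a s ha ih =>
      have hupd : (fun q => if q ∈ insert a s then w' q else w q)
          = Function.update (fun q => if q ∈ s then w' q else w q) a (w' a) := by
        funext q
        by_cases hq : q = a
        · subst hq; simp
        · simp [Function.update_apply, hq, Finset.mem_insert]
      rw [hupd]
      by_cases hQ : Q a
      · have : w' a = (fun q => if q ∈ s then w' q else w q) a := by
          simp [ha, (hag a hQ).symm]
        rw [this, Function.update_eq_self]
        exact ih
      · rw [update_invariant ψ hψ a (h0 a hQ)]
        exact ih
  have := key Finset.univ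
  simpa using this.symm

end Analysis


section Run

variable {N : ℕ} (φ : Fin N → (Fin N → ℝ) → ℝ)

lemma runFrom_lt (t s : ℕ) (w : Fin N → ℝ) (q : Fin N) (hq : (q : ℕ) < t) :
    runFrom N φ t s w q = w q := by
  induction s with
  | zero => rfl
  | succ s ih =>
    simp only [runFrom]
    by_cases h : t + s < N
    · rw [dif_pos h]
      rw [Function.update_apply]
      rw [if_neg (by intro hqe; subst hqe; simp only [Fin.val_mk] at hq; omega)]
      exact ih
    · rw [dif_neg h]; exact ih

lemma runFrom_stable (t s s' : ℕ) (hss : s ≤ s') (w : Fin N → ℝ) (q : Fin N)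
    (hq : (q : ℕ) < t + s) :
    runFrom N φ t s' w q = runFrom N φ t s w q := by
  induction s' with
  | zero => have : s = 0 := Nat.le_zero.mp hss; subst this; rfl
  | succ s' ih =>
    rcases Nat.lt_or_ge s (s'+1) with hlt | hge
    · have hs' : s ≤ s' := Nat.lt_succ_iff.mp hlt
      simp only [runFrom]
      by_cases h : t + s' < N
      · rw [dif_pos h, Function.update_apply,
          if_neg (by intro hqe; subst hqe; simp only [Fin.val_mk] at hq; omega)]
        exact ih hs'
      · rw [dif_neg h]; exact ih hs'
    · have : s = s' + 1 := le_antisymm hss hge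
      subst this; rfl

lemma runFrom_compute (t s : ℕ) (w : Fin N → ℝ) (h : t + s < N) :
    runFrom N φ t (s+1) w ⟨t+s, h⟩ = φ ⟨t+s, h⟩ (runFrom N φ t s w) := by
  simp only [runFrom]
  rw [dif_pos h]
  simp

variable {n : ℕ}

lemma contDiff_runFrom (hφ : ∀ k, ContDiff ℝ 2 (φ k)) (t s : ℕ)
    (g : (Fin n → ℝ) → (Fin N → ℝ)) (hg : ContDiff ℝ 2 g) :
    ContDiff ℝ 2 (fun x' => runFrom N φ t s (g x')) := by
  induction s with
  | zero => exact hg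
  | succ s ih =>
    by_cases h : t + s < N
    · have heq : (fun x' => runFrom N φ t (s+1) (g x'))
          = fun x' => Function.update (runFrom N φ t s (g x')) ⟨t+s, h⟩
              (φ ⟨t+s, h⟩ (runFrom N φ t s (g x'))) := by
        funext x'
        simp only [runFrom]
        rw [dif_pos h]
      rw [heq]
      rw [contDiff_pi]
      intro q
      by_cases hq : q = ⟨t+s, h⟩
      · subst hq
        simp only [Function.update_self]
        exact (hφ _).comp ih
      · have : (fun x' => Function.update (runFrom N φ t s (g x')) ⟨t+s, h⟩
            (φ ⟨t+s, h⟩ (runFrom N φ t s (g x'))) q)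
            = fun x' => runFrom N φ t s (g x') q := by
          funext x'; rw [Function.update_apply, if_neg hq]
        rw [this]
        exact contDiff_pi.mp ih q
    · have heq : (fun x' => runFrom N φ t (s+1) (g x'))
          = fun x' => runFrom N φ t s (g x') := by
        funext x'
        simp only [runFrom]
        rw [dif_neg h]
      rw [heq]; exact ih

end Run

section Proj

variable {N : ℕ} (A : Fin N → Fin N → Prop) [DecidableRel A]

/-- Projection onto coordinates that are predecessors of k. -/
noncomputable def depProj (k : Fin N) : (Fin N → ℝ) →L[ℝ] (Fin N → ℝ) :=
  ContinuousLinearMap.pi (fun m => if A m k then ContinuousLinearMap.proj m else 0)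

lemma depProj_apply (k m : Fin N) (w : Fin N → ℝ) :
    depProj A k w m = if A m k then w m else 0 := by
  unfold depProj
  rw [ContinuousLinearMap.pi_apply]
  by_cases h : A m k
  · simp [h]
  · simp [h]

lemma depProj_single_mem (k m : Fin N) (h : A m k) :
    depProj A k (Pi.single m 1) = Pi.single m 1 := by
  funext q
  rw [depProj_apply]
  by_cases hq : A q k
  · rw [if_pos hq]
  · rw [if_neg hq]
    rw [Pi.single_apply, if_neg (by rintro rfl; exact hq h)]

lemma depProj_single_not_mem (k m : Fin N) (h : ¬ A m k) :
    depProj A k (Pi.single m 1) = 0 := by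
  funext q
  rw [depProj_apply]
  by_cases hq : A q k
  · rw [if_pos hq, Pi.single_apply, if_neg (by rintro rfl; exact h hq)]; rfl
  · rw [if_neg hq]; rfl

variable (φ : Fin N → (Fin N → ℝ) → ℝ) (hC : ∀ k, ContDiff ℝ 2 (φ k))
  (hdep : ∀ k j, ¬ A j k → ∀ w, fderiv ℝ (φ k) w (Pi.single j 1) = 0)

include hC hdep in
lemma phi_factor (k : Fin N) (w : Fin N → ℝ) : φ k (depProj A k w) = φ k w := by
  apply agree_invariant (φ k) ((hC k).differentiable (by norm_num)) (fun m => A m k)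
    (fun m hm => hdep k m hm)
  intro m hm
  rw [depProj_apply, if_pos hm]

include hC hdep in
lemma fderiv_phi_factor (k : Fin N) (w : Fin N → ℝ) :
    fderiv ℝ (φ k) w = (fderiv ℝ (φ k) (depProj A k w)).comp (depProj A k) := by
  have hfun : φ k = fun u => φ k (depProj A k u) := by
    funext u; rw [phi_factor A φ hC hdep]
  conv_lhs => rw [hfun]
  rw [show (fun u => φ k ((depProj A k) u)) = φ k ∘ ⇑(depProj A k) from rfl]
  rw [fderiv_comp w (((hC k).differentiable (by norm_num)) _)
    (depProj A k).differentiableAt]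
  rw [(depProj A k).fderiv]

include hC hdep in
/-- The second-derivative weights vanish off arcs. -/
lemma H2_vanish (k r s : Fin N) (w : Fin N → ℝ) (h : ¬ (A r k ∧ A s k)) :
    fderiv ℝ (fun u => fderiv ℝ (φ k) u (Pi.single s 1)) w (Pi.single r 1) = 0 := by
  by_cases hs : A s k
  · -- then ¬ A r k
    have hr : ¬ A r k := fun hr => h ⟨hr, hs⟩
    have hL' : ContDiff ℝ 1 (fun u => fderiv ℝ (φ k) u (Pi.single s 1)) := by
      have h1 : ContDiff ℝ 1 (fderiv ℝ (φ k)) := (hC k).fderiv_right (by norm_num)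
      exact (ContinuousLinearMap.apply ℝ ℝ ((Pi.single s 1 : Fin N → ℝ))).contDiff.comp h1
    have hfac : (fun u => fderiv ℝ (φ k) u (Pi.single s 1))
        = fun u => (fun z => fderiv ℝ (φ k) z (Pi.single s 1)) (depProj A k u) := by
      funext u
      rw [fderiv_phi_factor A φ hC hdep]
      rw [ContinuousLinearMap.comp_apply, depProj_single_mem A k s hs]
    conv_lhs => rw [hfac]
    rw [show (fun u => (fun z => fderiv ℝ (φ k) z (Pi.single s 1)) ((depProj A k) u))
      = (fun z => fderiv ℝ (φ k) z (Pi.single s 1)) ∘ ⇑(depProj A k) from rfl]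
    rw [fderiv_comp w (hL'.differentiable (by norm_num) _)
      (depProj A k).differentiableAt]
    rw [(depProj A k).fderiv]
    rw [ContinuousLinearMap.comp_apply, depProj_single_not_mem A k r hr]
    simp
  · have hzero : (fun u => fderiv ℝ (φ k) u (Pi.single s 1)) = fun _ => (0:ℝ) := by
      funext u; exact hdep k s hs u
    rw [hzero, fderiv_fun_const]
    simp

end Proj


/-- the Hessian as a sum over nonlinear arcs:
∂²f/∂x_i∂x_j = Σ_{(r,s̄)} [ (Σ_{p : i→r} weight p) · c^{s̄}_r · (Σ_{q : j→s} weight q) ],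
where `PS a b` is the sum of the weights of the directed paths from a to b in
the computational graph (first-order arc weights c k m = ∂φ_k/∂v_m at the
evaluated point), and the nonlinear-arc weight is
c2 r s = c^{s̄}_r = Σ_{k : r≺k, s≺k} v̄_k ∂²φ_k/∂v_r∂v_s with v̄_k = ∂f/∂v_k the
adjoint (sum of path weights from k to the output node); pairs (r,s) that are
not nonlinear arcs contribute zero weight. -/
theorem hessian_path_partition (n ℓ : ℕ) (hℓ : 0 < ℓ)
    (A : Fin (n+ℓ) → Fin (n+ℓ) → Prop) [DecidableRel A]
    (hA : ∀ j k, A j k → j < k)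
    (hAint : ∀ j k, A j k → n ≤ (k : ℕ))
    (φ : Fin (n+ℓ) → (Fin (n+ℓ) → ℝ) → ℝ)
    (hC : ∀ k, ContDiff ℝ 2 (φ k))
    (hdep : ∀ k j, ¬ A j k → ∀ w, fderiv ℝ (φ k) w (Pi.single j 1) = 0)
    (lastIdx : Fin (n+ℓ)) (hlast : (lastIdx : ℕ) = n + ℓ - 1)
    (x : Fin n → ℝ)
    (f : (Fin n → ℝ) → ℝ)
    (hf : ∀ x', f x' = runFrom (n+ℓ) φ n ℓ
      (fun t => if h : (t : ℕ) < n then x' ⟨t, h⟩ else 0) lastIdx)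
    (v : Fin (n+ℓ) → ℝ)
    (hv : v = runFrom (n+ℓ) φ n ℓ (fun t => if h : (t : ℕ) < n then x ⟨t, h⟩ else 0))
    (c : Fin (n+ℓ) → Fin (n+ℓ) → ℝ)
    (hc : ∀ k m, c k m = fderiv ℝ (φ k) v (Pi.single m 1))
    (PS : Fin (n+ℓ) → Fin (n+ℓ) → ℝ)
    (hPS : ∀ a b, PS a b = ∑ᶠ (l : List (Fin (n+ℓ)))
        (_ : l.Chain' A ∧ l.head? = some a ∧ l.getLast? = some b), pathWeight c l)
    (vbar : Fin (n+ℓ) → ℝ) (hvbar : ∀ k, vbar k = PS k lastIdx)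
    (c2 : Fin (n+ℓ) → Fin (n+ℓ) → ℝ)
    (hc2 : ∀ r s, c2 r s = ∑ k ∈ Finset.univ.filter (fun k => A r k ∧ A s k),
        vbar k * H2 (φ k) v r s)
    (i j : Fin n) :
    H2 f x i j = ∑ r : Fin (n+ℓ), ∑ s : Fin (n+ℓ),
      PS (Fin.castAdd ℓ i) r * c2 r s * PS (Fin.castAdd ℓ j) s := by
  classical
  -- basic setup
  set init : (Fin n → ℝ) → (Fin (n+ℓ) → ℝ) :=
    fun x' => fun t => if h : (t : ℕ) < n then x' ⟨t, h⟩ else 0 with hinitdef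
  set V : (Fin n → ℝ) → (Fin (n+ℓ) → ℝ) := fun x' => runFrom (n+ℓ) φ n ℓ (init x') with hVdef
  set u : Fin (n+ℓ) → (Fin n → ℝ) → ℝ := fun b y => V y b with hudef
  have hinit : ContDiff ℝ 2 init := by
    rw [contDiff_pi]
    intro q
    by_cases hq : (q : ℕ) < n
    · have : (fun x' : Fin n → ℝ => init x' q) = fun x' => x' ⟨q, hq⟩ := by
        funext x'; simp only [hinitdef, dif_pos hq]
      rw [this]
      exact (ContinuousLinearMap.proj (⟨q, hq⟩ : Fin n)
        (R := ℝ) (φ := fun _ : Fin n => ℝ)).contDiff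
    · have : (fun x' : Fin n → ℝ => init x' q) = fun _ => (0:ℝ) := by
        funext x'; simp only [hinitdef, dif_neg hq]
      rw [this]
      exact contDiff_const
  have hV : ContDiff ℝ 2 V := contDiff_runFrom φ hC n ℓ init hinit
  have hu : ∀ b, ContDiff ℝ 2 (u b) := fun b => contDiff_pi.mp hV b
  have hvV : v = V x := hv
  have hfV : f = u lastIdx := by funext y; exact hf y
  -- values of input nodes
  have hu_lt : ∀ (b : Fin (n+ℓ)) (h : (b : ℕ) < n), u b = fun y => y ⟨b, h⟩ := by
    intro b h
    funext y
    show runFrom (n+ℓ) φ n ℓ (init y) b = y ⟨b, h⟩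
    rw [runFrom_lt φ n ℓ (init y) b h]
    simp only [hinitdef, dif_pos h]
  -- values of internal nodes
  have hu_int : ∀ (b : Fin (n+ℓ)), n ≤ (b : ℕ) → u b = fun y => φ b (V y) := by
    intro b hb
    funext y
    set s : ℕ := (b : ℕ) - n with hs
    have hsb : (b : ℕ) = n + s := by omega
    have hsℓ : s < ℓ := by have := b.isLt; omega
    have hbeq : b = ⟨n + s, by omega⟩ := by apply Fin.ext; simp [hsb]
    show runFrom (n+ℓ) φ n ℓ (init y) b = φ b (V y)
    have h1 : runFrom (n+ℓ) φ n ℓ (init y) b = runFrom (n+ℓ) φ n (s+1) (init y) b := by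
      apply runFrom_stable φ n (s+1) ℓ (by omega) (init y) b (by omega)
    have h2 : runFrom (n+ℓ) φ n (s+1) (init y) b = φ b (runFrom (n+ℓ) φ n s (init y)) := by
      conv_lhs => rw [hbeq]
      rw [runFrom_compute φ n s (init y) (by omega)]
      rw [← hbeq]
    rw [h1, h2]
    apply agree_invariant (φ b) ((hC b).differentiable (by norm_num)) (fun m => A m b)
      (fun m hm => hdep b m hm)
    intro m hm
    have hmb : (m : ℕ) < (b : ℕ) := hA m b hm
    show runFrom (n+ℓ) φ n s (init y) m = V y m
    rw [show V y m = runFrom (n+ℓ) φ n ℓ (init y) m from rfl]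
    rw [runFrom_stable φ n s ℓ (by omega) (init y) m (by omega)]
  -- directional derivatives
  set g : Fin n → Fin (n+ℓ) → (Fin n → ℝ) → ℝ :=
    fun i0 b y => fderiv ℝ (u b) y (Pi.single i0 1) with hgdef
  set cE : Fin (n+ℓ) → Fin (n+ℓ) → (Fin n → ℝ) → ℝ :=
    fun b m y => fderiv ℝ (φ b) (V y) (Pi.single m 1) with hcEdef
  have hg_smooth : ∀ i0 b, ContDiff ℝ 1 (g i0 b) := by
    intro i0 b
    exact (ContinuousLinearMap.apply ℝ ℝ ((Pi.single i0 1 : Fin n → ℝ))).contDiff.comp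
      ((hu b).fderiv_right (by norm_num))
  have hL_smooth : ∀ (b m : Fin (n+ℓ)),
      ContDiff ℝ 1 (fun w : Fin (n+ℓ) → ℝ => fderiv ℝ (φ b) w (Pi.single m 1)) := by
    intro b m
    exact (ContinuousLinearMap.apply ℝ ℝ ((Pi.single m 1 : Fin (n+ℓ) → ℝ))).contDiff.comp
      ((hC b).fderiv_right (by norm_num))
  have hcE_smooth : ∀ b m, ContDiff ℝ 1 (cE b m) := by
    intro b m
    exact (hL_smooth b m).comp (hV.of_le (by norm_num))
  -- coordinates of the derivative of V
  have hproj : ∀ (y : Fin n → ℝ) (d : Fin n → ℝ) (m : Fin (n+ℓ)),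
      fderiv ℝ V y d m = fderiv ℝ (u m) y d := by
    intro y d m
    have : V = fun y (q : Fin (n+ℓ)) => u q y := rfl
    rw [this, fderiv_pi (fun q => ((hu q).differentiable (by norm_num)).differentiableAt)]
    rfl
  -- expansion of a linear functional over coordinates
  have hexpand : ∀ (L : (Fin (n+ℓ) → ℝ) →L[ℝ] ℝ) (w : Fin (n+ℓ) → ℝ),
      L w = ∑ m : Fin (n+ℓ), w m * L (Pi.single m 1) := by
    intro L w
    conv_lhs => rw [← Finset.univ_sum_single w]
    rw [map_sum]
    refine Finset.sum_congr rfl fun m _ => ?_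
    have h1 : Pi.single m (w m) = w m • (Pi.single m 1 : Fin (n+ℓ) → ℝ) := by
      rw [← Pi.single_smul]; norm_num
    rw [h1, map_smul, smul_eq_mul]
  -- first-derivative recursion at internal nodes
  have hgrec : ∀ (i0 : Fin n) (b : Fin (n+ℓ)), n ≤ (b : ℕ) → ∀ y,
      g i0 b y = ∑ m : Fin (n+ℓ), cE b m y * g i0 m y := by
    intro i0 b hb y
    have h1 : g i0 b y = fderiv ℝ (φ b ∘ V) y (Pi.single i0 1) := by
      rw [hgdef]
      simp only []
      rw [hu_int b hb]
      rfl
    rw [h1, fderiv_comp y (((hC b).differentiable (by norm_num)) (V y))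
      ((hV.differentiable (by norm_num)) y)]
    rw [ContinuousLinearMap.comp_apply]
    rw [hexpand (fderiv ℝ (φ b) (V y)) (fderiv ℝ V y (Pi.single i0 1))]
    refine Finset.sum_congr rfl fun m _ => ?_
    rw [hproj y (Pi.single i0 1) m]
    ring
  -- path-sum facts
  have hPSeq : ∀ a b, PS a b = pathsSum A c hA a b := by
    intro a b
    rw [hPS a b]
    exact finsum_mem_eq_finite_toFinset_sum (pathWeight c) (pathSet_finite A hA a b)
  have hPSrec : ∀ a b, PS a b = (if a = b then 1 else 0)
      + ∑ m ∈ Finset.univ.filter (fun m => A m b), PS a m * c b m := by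
    intro a b
    simp only [hPSeq]
    exact pathsSum_rec A c hA a b
  have hPS_input : ∀ (a b : Fin (n+ℓ)), (b : ℕ) < n → PS a b = if a = b then 1 else 0 := by
    intro a b hb
    rw [hPSrec a b]
    have : Finset.univ.filter (fun m => A m b) = ∅ := by
      apply Finset.filter_false_of_mem
      intro m _ hm
      exact absurd (hAint m b hm) (by omega)
    rw [this]
    simp
  -- c vanishes off arcs
  have hc_zero : ∀ (b m : Fin (n+ℓ)), ¬ A m b → c b m = 0 := by
    intro b m hm
    rw [hc]
    exact hdep b m hm v
  -- g at the base point equals path sums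
  have hgPS : ∀ (i0 : Fin n) (b : Fin (n+ℓ)), g i0 b x = PS (Fin.castAdd ℓ i0) b := by
    intro i0
    have master : ∀ (K : ℕ) (b : Fin (n+ℓ)), (b : ℕ) < K → g i0 b x = PS (Fin.castAdd ℓ i0) b := by
      intro K
      induction K with
      | zero => intro b hb; omega
      | succ K IH =>
        intro b hb
        by_cases hbn : (b : ℕ) < n
        · -- input node
          have h1 : g i0 b x = if (⟨(b : ℕ), hbn⟩ : Fin n) = i0 then 1 else 0 := by
            rw [hgdef]
            simp only []
            rw [hu_lt b hbn]
            have : (fun y : Fin n → ℝ => y ⟨(b : ℕ), hbn⟩)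
                = (ContinuousLinearMap.proj (R := ℝ) (φ := fun _ : Fin n => ℝ)
                    (⟨(b : ℕ), hbn⟩ : Fin n)) := rfl
            rw [this, ContinuousLinearMap.fderiv]
            rw [ContinuousLinearMap.proj_apply, Pi.single_apply]
          rw [h1, hPS_input _ b hbn]
          congr 1
          rw [eq_iff_iff]
          constructor
          · rintro rfl; apply Fin.ext; simp
          · rintro rfl; apply Fin.ext; simp
        · -- internal node
          push_neg at hbn
          rw [hgrec i0 b hbn x, hPSrec]
          rw [if_neg (by intro he; have := congrArg Fin.val he; simp at this; omega)]
          rw [zero_add]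
          rw [← Finset.sum_filter_add_sum_filter_not Finset.univ (fun m => A m b)
            (fun m => cE b m x * g i0 m x)]
          have hz : ∑ m ∈ Finset.univ.filter (fun m => ¬ A m b), cE b m x * g i0 m x = 0 := by
            apply Finset.sum_eq_zero
            intro m hm
            rw [Finset.mem_filter] at hm
            have : cE b m x = 0 := by
              rw [hcEdef]
              simp only []
              rw [← hvV]
              exact hdep b m hm.2 v
            rw [this, zero_mul]
          rw [hz, add_zero]
          refine Finset.sum_congr rfl fun m hm => ?_
          rw [Finset.mem_filter] at hm
          have hmb : (m : ℕ) < (b : ℕ) := hA m b hm.2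
          rw [IH m (by omega)]
          have : cE b m x = c b m := by
            rw [hcEdef]
            simp only []
            rw [← hvV, hc]
          rw [this]
          ring
    intro b
    exact master ((b : ℕ) + 1) b (by omega)
  -- Hessian quantities
  set hess : Fin (n+ℓ) → ℝ := fun b => fderiv ℝ (g j b) x (Pi.single i 1) with hhessdef
  have hH : H2 f x i j = hess lastIdx := by
    rw [hhessdef]
    simp only []
    rw [H2, hfV]
  -- derivative of the edge-weight functions
  have hcEder : ∀ (b m : Fin (n+ℓ)),
      fderiv ℝ (cE b m) x (Pi.single i 1)
        = ∑ s : Fin (n+ℓ), g i s x * H2 (φ b) v s m := by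
    intro b m
    have h1 : cE b m = (fun w => fderiv ℝ (φ b) w (Pi.single m 1)) ∘ V := rfl
    rw [h1, fderiv_comp x (((hL_smooth b m).differentiable (by norm_num)) (V x))
      ((hV.differentiable (by norm_num)) x)]
    rw [ContinuousLinearMap.comp_apply]
    rw [← hvV]
    rw [hexpand (fderiv ℝ (fun w => fderiv ℝ (φ b) w (Pi.single m 1)) v)
      (fderiv ℝ V x (Pi.single i 1))]
    refine Finset.sum_congr rfl fun s _ => ?_
    rw [hproj x (Pi.single i 1) s]
    rfl
  -- second-derivative recursion at internal nodes
  have hhessrec : ∀ (b : Fin (n+ℓ)), n ≤ (b : ℕ) →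
      hess b = ∑ m : Fin (n+ℓ),
        ((∑ s : Fin (n+ℓ), PS (Fin.castAdd ℓ i) s * H2 (φ b) v s m) * PS (Fin.castAdd ℓ j) m
          + c b m * hess m) := by
    intro b hb
    have h1 : g j b = fun y => ∑ m : Fin (n+ℓ), cE b m y * g j m y := by
      funext y; exact hgrec j b hb y
    rw [hhessdef]
    simp only []
    conv_lhs => rw [h1]
    rw [fderiv_fun_sum (A := fun m y => cE b m y * g j m y) (fun m _ => (((hcE_smooth b m).differentiable (by norm_num)) x).mul
      (((hg_smooth j m).differentiable (by norm_num)) x))]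
    rw [ContinuousLinearMap.sum_apply]
    refine Finset.sum_congr rfl fun m _ => ?_
    rw [fderiv_fun_mul (((hcE_smooth b m).differentiable (by norm_num)) x)
      (((hg_smooth j m).differentiable (by norm_num)) x)]
    rw [ContinuousLinearMap.add_apply, ContinuousLinearMap.smul_apply,
      ContinuousLinearMap.smul_apply, smul_eq_mul, smul_eq_mul]
    rw [hcEder b m]
    have hce : cE b m x = c b m := by
      rw [hcEdef]; simp only []; rw [← hvV, hc]
    rw [hce, hgPS j m]
    have : ∀ s0 : Fin (n+ℓ), g i s0 x = PS (Fin.castAdd ℓ i) s0 := fun s0 => hgPS i s0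
    simp only [this]
    ring
  -- vanishing of second derivatives off arcs
  have hT0 : ∀ (k r s : Fin (n+ℓ)), ¬ (A r k ∧ A s k) → H2 (φ k) v r s = 0 := by
    intro k r s hk
    rw [H2]
    exact H2_vanish A φ hC hdep k r s v hk
  -- the master Hessian identity
  have master2 : ∀ (K : ℕ) (b : Fin (n+ℓ)), (b : ℕ) < K →
      hess b = ∑ r : Fin (n+ℓ), ∑ s : Fin (n+ℓ),
        PS (Fin.castAdd ℓ i) r
          * (∑ k : Fin (n+ℓ), PS k b * H2 (φ k) v r s) * PS (Fin.castAdd ℓ j) s := by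
    intro K
    induction K with
    | zero => intro b hb; omega
    | succ K IH =>
      intro b hbK
      by_cases hbn : (b : ℕ) < n
      · -- input node: both sides vanish
        have hL : hess b = 0 := by
          rw [hhessdef]
          simp only []
          have : g j b = fun _ : Fin n → ℝ =>
              ((Pi.single j 1 : Fin n → ℝ) ⟨(b : ℕ), hbn⟩) := by
            funext y
            rw [hgdef]
            simp only []
            rw [hu_lt b hbn]
            have h2 : (fun y : Fin n → ℝ => y ⟨(b : ℕ), hbn⟩)
                = (ContinuousLinearMap.proj (R := ℝ) (φ := fun _ : Fin n => ℝ)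
                    (⟨(b : ℕ), hbn⟩ : Fin n)) := rfl
            rw [h2, ContinuousLinearMap.fderiv]
            rfl
          rw [this, fderiv_fun_const]
          simp
        rw [hL]
        symm
        apply Finset.sum_eq_zero
        intro r _
        apply Finset.sum_eq_zero
        intro s _
        have : (∑ k : Fin (n+ℓ), PS k b * H2 (φ k) v r s) = H2 (φ b) v r s := by
          have h3 : ∀ k : Fin (n+ℓ), PS k b * H2 (φ k) v r s
              = if k = b then H2 (φ k) v r s else 0 := by
            intro k
            rw [hPS_input k b hbn]
            by_cases hkb : k = b
            · rw [if_pos hkb, if_pos hkb, one_mul]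
            · rw [if_neg hkb, if_neg hkb, zero_mul]
          rw [Finset.sum_congr rfl fun k _ => h3 k]
          rw [Finset.sum_ite_eq' Finset.univ b (fun k => H2 (φ k) v r s)]
          rw [if_pos (Finset.mem_univ b)]
        rw [this]
        rw [hT0 b r s (fun hx => absurd (hAint r b hx.1) (by omega))]
        ring
      · -- internal node
        push_neg at hbn
        rw [hhessrec b hbn]
        -- split LHS
        rw [Finset.sum_add_distrib]
        -- rewrite the first-order part of LHS
        have hfirst : ∑ m : Fin (n+ℓ),
            (∑ s : Fin (n+ℓ), PS (Fin.castAdd ℓ i) s * H2 (φ b) v s m)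
              * PS (Fin.castAdd ℓ j) m
            = ∑ r : Fin (n+ℓ), ∑ s : Fin (n+ℓ),
              PS (Fin.castAdd ℓ i) r * H2 (φ b) v r s * PS (Fin.castAdd ℓ j) s := by
          rw [Finset.sum_comm]
          refine Finset.sum_congr rfl fun r _ => ?_
          rw [← Finset.sum_mul]
        rw [hfirst]
        -- the lower-order part
        have hsecond : ∑ m : Fin (n+ℓ), c b m * hess m
            = ∑ m ∈ Finset.univ.filter (fun m => A m b), c b m *
              (∑ r : Fin (n+ℓ), ∑ s : Fin (n+ℓ),
                PS (Fin.castAdd ℓ i) r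
                  * (∑ k : Fin (n+ℓ), PS k m * H2 (φ k) v r s)
                  * PS (Fin.castAdd ℓ j) s) := by
          rw [← Finset.sum_filter_add_sum_filter_not Finset.univ (fun m => A m b)
            (fun m => c b m * hess m)]
          have hz2 : ∑ m ∈ Finset.univ.filter (fun m => ¬ A m b), c b m * hess m = 0 := by
            apply Finset.sum_eq_zero
            intro m hm
            rw [Finset.mem_filter] at hm
            rw [hc_zero b m hm.2, zero_mul]
          rw [hz2, add_zero]
          refine Finset.sum_congr rfl fun m hm => ?_
          rw [Finset.mem_filter] at hm
          have hmb : (m : ℕ) < (b : ℕ) := hA m b hm.2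
          rw [IH m (by omega)]
        rw [hsecond]
        -- the kernel recursion
        have hker : ∀ r s : Fin (n+ℓ), (∑ k : Fin (n+ℓ), PS k b * H2 (φ k) v r s)
            = H2 (φ b) v r s
              + ∑ m ∈ Finset.univ.filter (fun m => A m b),
                c b m * (∑ k : Fin (n+ℓ), PS k m * H2 (φ k) v r s) := by
          intro r s
          have h1 : ∀ k : Fin (n+ℓ), PS k b * H2 (φ k) v r s
              = (if k = b then H2 (φ k) v r s else 0)
                + ∑ m ∈ Finset.univ.filter (fun m => A m b),
                  c b m * (PS k m * H2 (φ k) v r s) := by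
            intro k
            rw [hPSrec k b, add_mul, Finset.sum_mul, ite_mul, one_mul, zero_mul]
            congr 1
            refine Finset.sum_congr rfl fun m _ => by ring
          rw [Finset.sum_congr rfl fun k _ => h1 k, Finset.sum_add_distrib,
            Finset.sum_ite_eq' Finset.univ b (fun k => H2 (φ k) v r s),
            if_pos (Finset.mem_univ b), Finset.sum_comm]
          congr 1
          refine Finset.sum_congr rfl fun m _ => ?_
          rw [Finset.mul_sum]
        -- expand the right-hand side using the kernel recursion
        have hexp : ∀ r s : Fin (n+ℓ),
            PS (Fin.castAdd ℓ i) r * (∑ k : Fin (n+ℓ), PS k b * H2 (φ k) v r s)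
              * PS (Fin.castAdd ℓ j) s
            = PS (Fin.castAdd ℓ i) r * H2 (φ b) v r s * PS (Fin.castAdd ℓ j) s
              + ∑ m ∈ Finset.univ.filter (fun m => A m b),
                c b m * (PS (Fin.castAdd ℓ i) r
                  * (∑ k : Fin (n+ℓ), PS k m * H2 (φ k) v r s)
                  * PS (Fin.castAdd ℓ j) s) := by
          intro r s
          rw [hker r s, mul_add, add_mul]
          congr 1
          rw [Finset.mul_sum, Finset.sum_mul]
          refine Finset.sum_congr rfl fun m _ => by ring
        rw [Finset.sum_congr rfl (fun r (_ : r ∈ Finset.univ) =>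
          Finset.sum_congr rfl (fun s (_ : s ∈ Finset.univ) => hexp r s))]
        simp only [Finset.sum_add_distrib]
        congr 1
        symm
        rw [Finset.sum_congr rfl (fun r (_ : r ∈ (Finset.univ : Finset (Fin (n+ℓ)))) =>
          Finset.sum_comm (s := (Finset.univ : Finset (Fin (n+ℓ))))
            (t := Finset.univ.filter (fun m => A m b)))]
        rw [Finset.sum_comm]
        refine Finset.sum_congr rfl fun m _ => ?_
        rw [Finset.mul_sum]
        refine Finset.sum_congr rfl fun r _ => ?_
        rw [Finset.mul_sum]
  -- final assembly
  rw [hH, master2 ((lastIdx : ℕ) + 1) lastIdx (by omega)]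
  refine Finset.sum_congr rfl fun r _ => ?_
  refine Finset.sum_congr rfl fun s _ => ?_
  have hc2' : c2 r s = ∑ k : Fin (n+ℓ), PS k lastIdx * H2 (φ k) v r s := by
    rw [hc2 r s]
    rw [Finset.sum_congr rfl (fun k (_ : k ∈ Finset.univ.filter (fun k => A r k ∧ A s k)) =>
      by rw [hvbar k])]
    apply Finset.sum_subset (Finset.subset_univ _)
    intro k _ hk
    rw [Finset.mem_filter] at hk
    rw [hT0 k r s (fun hx => hk ⟨Finset.mem_univ k, hx⟩), mul_zero]
  rw [hc2']
end

section
/- Let W be an (n+ℓ)×(n+ℓ) symmetric matrix whose only nonzero entries lie in rows/columns with indices ≤ i, and let Φ_i' be the state-transformation Jacobian (identity except row i equals (c^i)^T with support in predecessors of i and zero from column i onward). Then ((Φ_i')^T W Φ_i')_{jk} = w_{jk} + (∂φ_i/∂v_k)(∂φ_i/∂v_j) w_{ii} + (∂φ_i/∂v_k) w_{ji} + (∂φ_i/∂v_j) w_{ik} for j, k < i, and ((Φ_i')^T W Φ_i')_{jk} = 0 whenever j ≥ i or k ≥ i. -/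
open Matrix

/-- componentwise form of the pushing step.  If W is symmetric
with nonzero entries only in rows/columns of index ≤ i, and J = Φᵢ' is the
identity except that row i equals the gradient cᵀ of φᵢ (supported on the
predecessors of i, all of index < i), then (JᵀWJ)_{jk} =
w_{jk} + c_k c_j w_{ii} + c_k w_{ji} + c_j w_{ik} for j,k < i, and
(JᵀWJ)_{jk} = 0 whenever j ≥ i or k ≥ i. -/
theorem pushing_step_componentwise (N : ℕ) (i : Fin N)
    (pred : Fin N → Prop) (hlt : ∀ j, pred j → j < i)
    (c : Fin N → ℝ) (hc : ∀ b, ¬ pred b → c b = 0)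
    (W : Matrix (Fin N) (Fin N) ℝ) (hWsym : W.IsSymm)
    (hW : ∀ a b : Fin N, (i < a ∨ i < b) → W a b = 0)
    (J : Matrix (Fin N) (Fin N) ℝ)
    (hJ : ∀ a b, J a b = if a = i then c b else if a = b then 1 else 0) :
    (∀ j k : Fin N, j < i → k < i →
        (Jᵀ * W * J) j k = W j k + c k * c j * W i i + c k * W j i + c j * W i k)
    ∧ (∀ j k : Fin N, (i ≤ j ∨ i ≤ k) → (Jᵀ * W * J) j k = 0) := by
  -- c vanishes at indices ≥ i
  have hc0 : ∀ b : Fin N, i ≤ b → c b = 0 := by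
    intro b hb
    exact hc b (fun hp => absurd (hlt b hp) (not_lt.mpr hb))
  -- left multiplication
  have h1 : ∀ j b : Fin N, (Jᵀ * W) j b = c j * W i b + (if j = i then 0 else W j b) := by
    intro j b
    simp only [Matrix.mul_apply, Matrix.transpose_apply, hJ]
    have key : ∀ a : Fin N, (if a = i then c j else if a = j then 1 else 0) * W a b
        = (if a = i then c j * W i b else 0)
          + (if a = j then (if j = i then 0 else W j b) else 0) := by
      intro a
      by_cases hai : a = i
      · subst hai
        by_cases haj : a = j <;> simp_all
      · by_cases haj : a = j
        · subst haj; simp [hai, Ne.symm hai]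
        · simp [hai, haj]
    rw [Finset.sum_congr rfl (fun a _ => key a), Finset.sum_add_distrib,
      Finset.sum_ite_eq' Finset.univ i (fun _ => c j * W i b),
      Finset.sum_ite_eq' Finset.univ j]
    simp
  -- right multiplication
  have h2 : ∀ j k : Fin N,
      (Jᵀ * W * J) j k = (Jᵀ * W) j i * c k + (if k = i then 0 else (Jᵀ * W) j k) := by
    intro j k
    rw [Matrix.mul_apply]
    have key : ∀ b : Fin N, (Jᵀ * W) j b * J b k
        = (if b = i then (Jᵀ * W) j i * c k else 0)
          + (if b = k then (if k = i then 0 else (Jᵀ * W) j k) else 0) := by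
      intro b
      rw [hJ]
      by_cases hbi : b = i
      · subst hbi
        by_cases hbk : b = k <;> simp_all
      · by_cases hbk : b = k
        · subst hbk; simp [hbi, Ne.symm hbi]
        · simp [hbi, hbk]
    rw [Finset.sum_congr rfl (fun b _ => key b), Finset.sum_add_distrib,
      Finset.sum_ite_eq' Finset.univ i, Finset.sum_ite_eq' Finset.univ k]
    simp
  constructor
  · intro j k hj hk
    have hji : j ≠ i := ne_of_lt hj
    have hki : k ≠ i := ne_of_lt hk
    rw [h2, h1, h1]
    simp only [if_neg hji, if_neg hki]
    ring
  · intro j k hjk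
    rw [h2, h1, h1]
    rcases hjk with hj | hk
    · rcases eq_or_lt_of_le hj with hji | hji
      · subst hji
        simp [hc0 i le_rfl]
      · have hcj : c j = 0 := hc0 j hj
        have h1' : W j i = 0 := hW j i (Or.inl hji)
        have h2' : W j k = 0 := hW j k (Or.inl hji)
        simp [hcj, h1', h2']
    · rcases eq_or_lt_of_le hk with hki | hki
      · subst hki
        simp [hc0 i le_rfl]
      · have hck : c k = 0 := hc0 k hk
        have h1' : W i k = 0 := hW i k (Or.inr hki)
        have h2' : W j k = 0 := hW j k (Or.inr hki)
        simp [hck, h1', h2']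
end

section
/- In the block reverse Hessian algorithm (edge_pushing block form), which initializes W = 0, v̄ = e_ℓ, and for i = ℓ down to 1 performs W ← (Φ_i')^T W Φ_i', then W ← W + (v̄^T Φ_i''), then v̄^T ← v̄^T Φ_i', the following invariant holds: at the end of the iteration sweeping node i, W = Σ_{k=i}^ℓ (Φ_i'^T ⋯ Φ_{k-1}'^T)((v̄^k)^T Φ_k'')(Φ_{k-1}' ⋯ Φ_i'), where (v̄^k)^T = e_ℓ^T Φ_ℓ' ⋯ Φ_{k+1}'. In particular, at termination f''(x) = P W P^T. -/
open Matrix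

/-- First partial derivative ∂g/∂x_j. -/
noncomputable def pd {n : ℕ} (g : (Fin n → ℝ) → ℝ) (x : Fin n → ℝ) (j : Fin n) : ℝ :=
  fderiv ℝ g x (Pi.single j 1)

lemma clm_apply_eq_sum {p : ℕ} (L : (Fin p → ℝ) →L[ℝ] ℝ) (v : Fin p → ℝ) :
    L v = ∑ b, v b * L (Pi.single b 1) := by
  conv_lhs => rw [← Finset.univ_sum_single v]
  rw [map_sum]
  refine Finset.sum_congr rfl fun b _ => ?_
  have h : Pi.single b (v b) = v b • (Pi.single b 1 : Fin p → ℝ) := by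
    rw [← Pi.single_smul, smul_eq_mul, mul_one]
  rw [h, _root_.map_smul, smul_eq_mul]

lemma coord_fderiv {m p : ℕ} {F : (Fin m → ℝ) → (Fin p → ℝ)} {x : Fin m → ℝ}
    (hF : DifferentiableAt ℝ F x) (b : Fin p) :
    fderiv ℝ (fun y => F y b) x = (ContinuousLinearMap.proj b).comp (fderiv ℝ F x) := by
  exact (((ContinuousLinearMap.proj b : (Fin p → ℝ) →L[ℝ] ℝ).hasFDerivAt).comp x
    hF.hasFDerivAt).fderiv

lemma chain1 {m p : ℕ} (F : (Fin m → ℝ) → (Fin p → ℝ)) (G : (Fin p → ℝ) → ℝ)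
    (x : Fin m → ℝ) (hF : DifferentiableAt ℝ F x) (hG : DifferentiableAt ℝ G (F x))
    (j : Fin m) :
    pd (fun y => G (F y)) x j = ∑ b, pd G (F x) b * pd (fun y => F y b) x j := by
  have h1 : fderiv ℝ (fun y => G (F y)) x = (fderiv ℝ G (F x)).comp (fderiv ℝ F x) := by
    have := fderiv_comp x hG hF
    simpa [Function.comp_def] using this
  simp only [pd, h1, ContinuousLinearMap.comp_apply]
  rw [clm_apply_eq_sum (fderiv ℝ G (F x)) (fderiv ℝ F x (Pi.single j 1))]
  refine Finset.sum_congr rfl fun b _ => ?_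
  rw [mul_comm]
  congr 1
  rw [coord_fderiv hF b]
  simp

lemma pd_contDiff {p : ℕ} {G : (Fin p → ℝ) → ℝ} (hG : ContDiff ℝ 2 G) (c : Fin p) :
    ContDiff ℝ 1 (fun u => pd G u c) := by
  have h : ContDiff ℝ 1 (fderiv ℝ G) := hG.fderiv_right (by norm_num)
  exact h.clm_apply contDiff_const

lemma chain2 {m p : ℕ} (F : (Fin m → ℝ) → (Fin p → ℝ)) (G : (Fin p → ℝ) → ℝ)
    (hF : ContDiff ℝ 2 F) (hG : ContDiff ℝ 2 G) (x : Fin m → ℝ) (j k : Fin m) :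
    H2 (fun y => G (F y)) x j k
      = (∑ b, ∑ c, H2 G (F x) b c * pd (fun y => F y b) x j * pd (fun y => F y c) x k)
        + ∑ c, pd G (F x) c * H2 (fun y => F y c) x j k := by
  have hFd : Differentiable ℝ F := hF.differentiable (by norm_num)
  have hGd : Differentiable ℝ G := hG.differentiable (by norm_num)
  have hFb : ∀ b, ContDiff ℝ 2 (fun y => F y b) := fun b => contDiff_pi.mp hF b
  have hinner : (fun y => fderiv ℝ (fun z => G (F z)) y (Pi.single k 1))
      = fun y => ∑ c, pd G (F y) c * pd (fun z => F z c) y k := by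
    funext y
    exact chain1 F G y (hFd y) (hGd (F y)) k
  have hstep : H2 (fun y => G (F y)) x j k
      = pd (fun y => ∑ c, pd G (F y) c * pd (fun z => F z c) y k) x j := by
    simp only [H2, pd, hinner]
  rw [hstep]
  have hA : ∀ c : Fin p, DifferentiableAt ℝ (fun y => pd G (F y) c) x := by
    intro c
    exact ((pd_contDiff hG c).differentiable one_ne_zero (F x)).comp x (hFd x)
  have hB : ∀ c : Fin p, DifferentiableAt ℝ (fun y => pd (fun z => F z c) y k) x := by
    intro c
    exact ((pd_contDiff (hFb c) k).differentiable one_ne_zero) x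
  have hsum : pd (fun y => ∑ c, pd G (F y) c * pd (fun z => F z c) y k) x j
      = ∑ c, pd (fun y => pd G (F y) c * pd (fun z => F z c) y k) x j := by
    show fderiv ℝ (fun y => ∑ c, pd G (F y) c * pd (fun z => F z c) y k) x (Pi.single j 1) = _
    rw [fderiv_fun_sum (A := fun c y => pd G (F y) c * pd (fun z => F z c) y k) (fun c _ => ((hA c).mul (hB c)))]
    simp [pd]
  rw [hsum]
  have hprod : ∀ c : Fin p, pd (fun y => pd G (F y) c * pd (fun z => F z c) y k) x j
      = pd (fun y => pd G (F y) c) x j * pd (fun z => F z c) x k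
        + pd G (F x) c * H2 (fun z => F z c) x j k := by
    intro c
    show fderiv ℝ (fun y => pd G (F y) c * pd (fun z => F z c) y k) x (Pi.single j 1) = _
    rw [fderiv_fun_mul (hA c) (hB c)]
    simp only [ContinuousLinearMap.add_apply, ContinuousLinearMap.smul_apply, smul_eq_mul,
      pd, H2]
    ring
  have hchain : ∀ c : Fin p, pd (fun y => pd G (F y) c) x j
      = ∑ b, H2 G (F x) b c * pd (fun y => F y b) x j := by
    intro c
    have := chain1 F (fun u => pd G u c) x (hFd x)
      (((pd_contDiff hG c).differentiable one_ne_zero) (F x)) j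
    rw [this]
    rfl
  calc ∑ c, pd (fun y => pd G (F y) c * pd (fun z => F z c) y k) x j
      = ∑ c, ((∑ b, H2 G (F x) b c * pd (fun y => F y b) x j) * pd (fun z => F z c) x k
        + pd G (F x) c * H2 (fun z => F z c) x j k) := by
        refine Finset.sum_congr rfl fun c _ => ?_
        rw [hprod c, hchain c]
    _ = _ := by
        rw [Finset.sum_add_distrib]
        congr 1
        rw [Finset.sum_comm]
        refine Finset.sum_congr rfl fun b _ => ?_
        rw [Finset.sum_mul]

/-- invariant of the block edge_pushing algorithm.  Sweeping nodes
ℓ, ℓ-1, …, 1 with W ← Φᵢ'ᵀWΦᵢ' + (v̄ⁱ)ᵀΦᵢ'' (W initialized to 0), after s steps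
(i.e., at the end of the iteration sweeping node i = ℓ-s+1)
W = Σ_{k=i}^{ℓ} (Φᵢ'ᵀ⋯Φ_{k-1}'ᵀ)((v̄ᵏ)ᵀΦ_k'')(Φ_{k-1}'⋯Φᵢ'), with
(v̄ᵏ)ᵀ = e_ℓᵀΦ_ℓ'⋯Φ_{k+1}'; at termination f'' = P(Wseq ℓ)Pᵀ.  Here `Φ t`,
`Jac t`, `Hterm t` are the paper's Φ_{t+1}, its Jacobian and the central
multiplicand (v̄^{t+1})ᵀΦ_{t+1}'' at the intermediate point Z t x, and
`Rel b m` = Jac (b+m-1) ⋯ Jac b is the relative product of Jacobians. -/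
theorem edge_pushing_block_invariant (n ℓ : ℕ) (hℓ : 0 < ℓ)
    (Φ : ℕ → (Fin (n+ℓ) → ℝ) → (Fin (n+ℓ) → ℝ))
    (hΦ : ∀ t, ContDiff ℝ 2 (Φ t))
    (lastIdx : Fin (n+ℓ)) (hlast : (lastIdx : ℕ) = n + ℓ - 1)
    (x : Fin n → ℝ)
    (Z : ℕ → (Fin n → ℝ) → (Fin (n+ℓ) → ℝ))
    (hZ0 : ∀ x t, Z 0 x t = if h : (t : ℕ) < n then x ⟨t, h⟩ else 0)
    (hZs : ∀ i x, Z (i+1) x = Φ i (Z i x))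
    (f : (Fin n → ℝ) → ℝ) (hf : ∀ x, f x = Z ℓ x lastIdx)
    (vbar : ℕ → Fin (n+ℓ) → ℝ)
    (hvℓ : vbar ℓ = Pi.single lastIdx 1)
    (hvs : ∀ t, t < ℓ → ∀ j,
      vbar t j = ∑ a, vbar (t+1) a * pd (fun w => Φ t w a) (Z t x) j)
    (Jac : ℕ → Matrix (Fin (n+ℓ)) (Fin (n+ℓ)) ℝ)
    (hJac : ∀ t a b, Jac t a b = pd (fun w => Φ t w a) (Z t x) b)
    (Hterm : ℕ → Matrix (Fin (n+ℓ)) (Fin (n+ℓ)) ℝ)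
    (hHterm : ∀ t j k, Hterm t j k
      = ∑ a, vbar (t+1) a * H2 (fun w => Φ t w a) (Z t x) j k)
    (Wseq : ℕ → Matrix (Fin (n+ℓ)) (Fin (n+ℓ)) ℝ)
    (hW0 : Wseq 0 = 0)
    (hWs : ∀ s, s < ℓ → Wseq (s+1)
      = (Jac (ℓ - s - 1))ᵀ * Wseq s * Jac (ℓ - s - 1) + Hterm (ℓ - s - 1))
    (Rel : ℕ → ℕ → Matrix (Fin (n+ℓ)) (Fin (n+ℓ)) ℝ)
    (hRel0 : ∀ b, Rel b 0 = 1)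
    (hRelS : ∀ b s, Rel b (s+1) = Jac (b + s) * Rel b s) :
    (∀ s, s ≤ ℓ → Wseq s = ∑ t ∈ Finset.Ico (ℓ - s) ℓ,
        (Rel (ℓ - s) (t - (ℓ - s)))ᵀ * Hterm t * Rel (ℓ - s) (t - (ℓ - s)))
    ∧ ∀ j k : Fin n, H2 f x j k = Wseq ℓ (Fin.castAdd ℓ j) (Fin.castAdd ℓ k) := by
  -- Rel splits off the bottom factor
  have hRel' : ∀ m b, Rel b (m+1) = Rel (b+1) m * Jac b := by
    intro m
    induction m with
    | zero => intro b; rw [hRelS, hRel0, hRel0, Nat.add_zero, Matrix.one_mul, Matrix.mul_one]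
    | succ m ih =>
      intro b
      have hidx : b + (m+1) = (b+1) + m := by omega
      rw [hRelS b (m+1), ih b, hRelS (b+1) m, ← Matrix.mul_assoc, hidx]
  -- Part 1: the algebraic invariant
  have part1 : ∀ s, s ≤ ℓ → Wseq s = ∑ t ∈ Finset.Ico (ℓ - s) ℓ,
      (Rel (ℓ - s) (t - (ℓ - s)))ᵀ * Hterm t * Rel (ℓ - s) (t - (ℓ - s)) := by
    intro s
    induction s with
    | zero => intro _; simp [hW0]
    | succ s ih =>
      intro hs
      have hsl : s < ℓ := by omega
      rw [hWs s hsl, ih (le_of_lt hsl)]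
      have hi1 : ℓ - s = (ℓ - s - 1) + 1 := by omega
      set i := ℓ - s - 1 with hidef
      have hi2 : ℓ - (s+1) = i := by omega
      have hilt : i < ℓ := by omega
      rw [hi2, hi1]
      rw [Finset.sum_eq_sum_Ico_succ_bot hilt]
      rw [Nat.sub_self, hRel0, Matrix.transpose_one, Matrix.one_mul, Matrix.mul_one]
      rw [Matrix.mul_sum, Matrix.sum_mul]
      have hterm : ∑ t ∈ Finset.Ico (i+1) ℓ,
          (Jac i)ᵀ * ((Rel (i+1) (t - (i+1)))ᵀ * Hterm t * Rel (i+1) (t - (i+1))) * Jac i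
          = ∑ t ∈ Finset.Ico (i+1) ℓ, (Rel i (t - i))ᵀ * Hterm t * Rel i (t - i) := by
        refine Finset.sum_congr rfl fun t ht => ?_
        have htmem := Finset.mem_Ico.mp ht
        have h3 : t - i = (t - (i+1)) + 1 := by omega
        rw [h3, hRel' (t - (i+1)) i]
        rw [Matrix.transpose_mul]
        noncomm_ring
      rw [hterm]
      exact add_comm _ _
  -- smoothness of Z
  have hΦpi : ∀ t a, ContDiff ℝ 2 (fun w => Φ t w a) := fun t a => contDiff_pi.mp (hΦ t) a
  have hZC : ∀ t, ContDiff ℝ 2 (Z t) := by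
    intro t
    induction t with
    | zero =>
      have hZ0' : Z 0 = fun y (t : Fin (n+ℓ)) => if h : (t : ℕ) < n then y ⟨t, h⟩ else 0 :=
        funext fun y => funext fun t => hZ0 y t
      rw [hZ0']
      refine contDiff_pi.mpr fun t => ?_
      by_cases h : (t : ℕ) < n
      · simp only [dif_pos h]
        exact (ContinuousLinearMap.proj (⟨t, h⟩ : Fin n) :
          (Fin n → ℝ) →L[ℝ] ℝ).contDiff
      · simp only [dif_neg h]
        exact contDiff_const
    | succ t ih =>
      have : Z (t+1) = fun y => Φ t (Z t y) := funext fun y => hZs t y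
      rw [this]
      exact (hΦ t).comp ih
  -- main analytic induction
  have main : ∀ t, t ≤ ℓ →
      (∀ (b : Fin (n+ℓ)) (j : Fin n),
        pd (fun y => Z t y b) x j = Rel 0 t b (Fin.castAdd ℓ j))
      ∧ (∀ j k : Fin n, (∑ c, vbar t c * H2 (fun y => Z t y c) x j k)
          = ∑ s ∈ Finset.range t, ∑ b, ∑ c,
              Hterm s b c * Rel 0 s b (Fin.castAdd ℓ j) * Rel 0 s c (Fin.castAdd ℓ k)) := by
    intro t
    induction t with
    | zero =>
      intro _
      constructor
      · intro b j
        have hfun : (fun y => Z 0 y b)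
            = fun y : Fin n → ℝ => if h : (b : ℕ) < n then y ⟨b, h⟩ else 0 :=
          funext fun y => hZ0 y b
        rw [hfun, hRel0]
        by_cases h : (b : ℕ) < n
        · simp only [dif_pos h]
          have hP : HasFDerivAt (fun y : Fin n → ℝ => y ⟨b, h⟩)
              (ContinuousLinearMap.proj (⟨b, h⟩ : Fin n) : (Fin n → ℝ) →L[ℝ] ℝ) x :=
            (ContinuousLinearMap.proj (⟨(b : ℕ), h⟩ : Fin n) :
              (Fin n → ℝ) →L[ℝ] ℝ).hasFDerivAt
          simp only [pd, hP.fderiv, ContinuousLinearMap.proj_apply]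
          rw [Pi.single_apply, Matrix.one_apply]
          by_cases hbj : (b : ℕ) = (j : ℕ)
          · rw [if_pos, if_pos] <;> exact Fin.ext (by simp [hbj])
          · rw [if_neg, if_neg]
            · exact fun hcon => hbj (by simpa [Fin.ext_iff] using hcon)
            · exact fun hcon => hbj (by simpa [Fin.ext_iff] using hcon)
        · simp only [dif_neg h]
          rw [pd, fderiv_fun_const]
          simp only [ContinuousLinearMap.zero_apply, Pi.zero_apply]
          rw [Matrix.one_apply_ne]
          exact fun hcon => h (by simp [Fin.ext_iff] at hcon; omega)
      · intro j k
        rw [Finset.range_zero, Finset.sum_empty]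
        refine Finset.sum_eq_zero fun c _ => ?_
        have hfun : (fun y => Z 0 y c)
            = fun y : Fin n → ℝ => if h : (c : ℕ) < n then y ⟨c, h⟩ else 0 :=
          funext fun y => hZ0 y c
        rw [hfun]
        by_cases h : (c : ℕ) < n
        · simp only [dif_pos h]
          have hconst : (fun y : Fin n → ℝ =>
              fderiv ℝ (fun z : Fin n → ℝ => z ⟨c, h⟩) y (Pi.single k 1))
              = fun _ : Fin n → ℝ => (Pi.single k 1 : Fin n → ℝ) ⟨c, h⟩ := by
            funext y
            have hP : HasFDerivAt (fun z : Fin n → ℝ => z ⟨c, h⟩)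
                (ContinuousLinearMap.proj (⟨(c : ℕ), h⟩ : Fin n) : (Fin n → ℝ) →L[ℝ] ℝ) y :=
              (ContinuousLinearMap.proj (⟨(c : ℕ), h⟩ : Fin n) :
                (Fin n → ℝ) →L[ℝ] ℝ).hasFDerivAt
            rw [hP.fderiv]
            rfl
          rw [H2, hconst, fderiv_fun_const]
          simp
        · simp only [dif_neg h]
          rw [H2]
          simp
    | succ t ih =>
      intro hts
      have htl : t < ℓ := by omega
      obtain ⟨ih1, ih2⟩ := ih (le_of_lt htl)
      have hZt1 : Z (t+1) = fun y => Φ t (Z t y) := funext fun y => hZs t y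
      have hfirst : ∀ (a : Fin (n+ℓ)) (j : Fin n),
          pd (fun y => Z (t+1) y a) x j = Rel 0 (t+1) a (Fin.castAdd ℓ j) := by
        intro a j
        have hfun : (fun y => Z (t+1) y a) = fun y => Φ t (Z t y) a := by
          funext y; rw [hZs]
        rw [hfun]
        rw [chain1 (Z t) (fun w => Φ t w a) x ((hZC t).differentiable (by norm_num) x)
          ((hΦpi t a).differentiable (by norm_num) (Z t x)) j]
        rw [hRelS 0 t, Nat.zero_add, Matrix.mul_apply]
        refine Finset.sum_congr rfl fun b _ => ?_
        rw [ih1 b j, hJac t a b]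
      refine ⟨hfirst, ?_⟩
      intro j k
      calc ∑ c, vbar (t+1) c * H2 (fun y => Z (t+1) y c) x j k
          = ∑ a, vbar (t+1) a *
              ((∑ b, ∑ c, H2 (fun w => Φ t w a) (Z t x) b c
                  * Rel 0 t b (Fin.castAdd ℓ j) * Rel 0 t c (Fin.castAdd ℓ k))
                + ∑ c, pd (fun w => Φ t w a) (Z t x) c * H2 (fun y => Z t y c) x j k) := by
            refine Finset.sum_congr rfl fun a _ => ?_
            congr 1
            have hfun : (fun y => Z (t+1) y a) = fun y => Φ t (Z t y) a := by
              funext y; rw [hZs]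
            rw [hfun, chain2 (Z t) (fun w => Φ t w a) (hZC t) (hΦpi t a) x j k]
            simp only [ih1]
        _ = (∑ b, ∑ c, Hterm t b c * Rel 0 t b (Fin.castAdd ℓ j)
                * Rel 0 t c (Fin.castAdd ℓ k))
            + ∑ c, vbar t c * H2 (fun y => Z t y c) x j k := by
            simp only [mul_add, Finset.sum_add_distrib, Finset.mul_sum]
            congr 1
            · rw [Finset.sum_comm]
              refine Finset.sum_congr rfl fun b _ => ?_
              rw [Finset.sum_comm]
              refine Finset.sum_congr rfl fun c _ => ?_
              rw [hHterm t b c, Finset.sum_mul, Finset.sum_mul]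
              refine Finset.sum_congr rfl fun a _ => ?_
              ring
            · rw [Finset.sum_comm]
              refine Finset.sum_congr rfl fun c _ => ?_
              rw [hvs t htl c, Finset.sum_mul]
              refine Finset.sum_congr rfl fun a _ => ?_
              ring
        _ = ∑ s ∈ Finset.range (t+1), ∑ b, ∑ c,
              Hterm s b c * Rel 0 s b (Fin.castAdd ℓ j) * Rel 0 s c (Fin.castAdd ℓ k) := by
            rw [Finset.sum_range_succ, ih2 j k, add_comm]
  refine ⟨part1, ?_⟩
  intro j k
  have hfeq : f = fun y => Z ℓ y lastIdx := funext hf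
  have hsingle : ∑ c, vbar ℓ c * H2 (fun y => Z ℓ y c) x j k
      = H2 (fun y => Z ℓ y lastIdx) x j k := by
    rw [hvℓ]
    rw [Finset.sum_eq_single lastIdx]
    · simp
    · intro c _ hc
      simp [Pi.single_apply, hc]
    · simp
  rw [hfeq, ← hsingle, (main ℓ le_rfl).2 j k]
  have hW := part1 ℓ le_rfl
  rw [Nat.sub_self] at hW
  have hIco : Finset.Ico 0 ℓ = Finset.range ℓ := by rw [Finset.range_eq_Ico]
  rw [hIco] at hW
  simp only [Nat.sub_zero] at hW
  rw [hW, Matrix.sum_apply]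
  refine Finset.sum_congr rfl fun t _ => ?_
  simp only [Matrix.mul_apply, Matrix.transpose_apply, Finset.sum_mul]
  rw [Finset.sum_comm]
  refine Finset.sum_congr rfl fun b _ => ?_
  refine Finset.sum_congr rfl fun c _ => ?_
  ring
end

section
/- In the reverse gradient sweep, sweeping node i preserves the path-sum invariant: if before the update each v̄_j (for j < i not yet swept) equals the sum of weights of all directed paths from j to ℓ that pass only through already-swept nodes after j, then after distributing v̄_i to predecessors (v̄_j ← v̄_j + c^i_j v̄_i for j ≺ i), each predecessor's adjoint additionally accounts for all paths from j to ℓ through node i, each weighted by c^i_j times the weight of the corresponding path from i to ℓ. -/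
lemma pathWeight_cons_cons_s19 {V : Type*} (c : V → V → ℝ) (a b : V) (t : List V) :
    pathWeight c (a :: b :: t) = c b a * pathWeight c (b :: t) := rfl

/-- one step of the reverse gradient sweep preserves the path-sum
invariant.  If, right before node i is swept, every adjoint v̄_j (j ≤ i) equals
the sum of weights of directed paths from j to the top node ℓ all of whose
subsequent nodes are already swept (> i), then after distributing v̄_i to the
predecessors (v̄_j ← v̄_j + c^i_j v̄_i for j ≺ i), every v̄_j with j < i equals the
sum of weights of paths from j to ℓ whose subsequent nodes lie in the enlarged
swept set (≥ i): each path through i is accounted with weight c^i_j times the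
weight of the corresponding path from i to ℓ. -/
theorem reverse_sweep_invariant_step (N : ℕ)
    (A : Fin (N+1) → Fin (N+1) → Prop) [DecidableRel A]
    (hA : ∀ j k, A j k → j < k)
    (c : Fin (N+1) → Fin (N+1) → ℝ)
    (i : Fin (N+1))
    (vb vb' : Fin (N+1) → ℝ)
    (hvb' : ∀ j, vb' j = vb j + (if A j i then c i j * vb i else 0))
    (hinv : ∀ j, j ≤ i → vb j = ∑ᶠ (l : List (Fin (N+1)))
        (_ : l.Chain' A ∧ l.head? = some j ∧ l.getLast? = some (Fin.last N)
          ∧ ∀ t ∈ l.tail, i < t), pathWeight c l) :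
    ∀ j, j < i → vb' j = ∑ᶠ (l : List (Fin (N+1)))
        (_ : l.Chain' A ∧ l.head? = some j ∧ l.getLast? = some (Fin.last N)
          ∧ ∀ t ∈ l.tail, i ≤ t), pathWeight c l := by
  classical
  intro j hj
  -- every A-chain is strictly increasing, hence nodup
  have hpw : ∀ l : List (Fin (N+1)), l.Chain' A → l.Pairwise (· < ·) := fun l hl =>
    List.isChain_iff_pairwise.mp (hl.imp (fun a b h => hA a b h))
  have hndset : ({l : List (Fin (N+1)) | l.Nodup}).Finite :=
    Set.Finite.ofFinset (Finset.univ.map (Function.Embedding.subtype fun l => l.Nodup))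
      (by simp)
  -- the three sets of paths
  set ℓ := Fin.last N with hℓ
  let Sge : Set (List (Fin (N+1))) := {l | l.Chain' A ∧ l.head? = some j ∧
      l.getLast? = some ℓ ∧ ∀ t ∈ l.tail, i ≤ t}
  let Sgt : Fin (N+1) → Set (List (Fin (N+1))) := fun k => {l | l.Chain' A ∧ l.head? = some k ∧
      l.getLast? = some ℓ ∧ ∀ t ∈ l.tail, i < t}
  let T : Set (List (Fin (N+1))) := {l | l ∈ Sge ∧ i ∈ l.tail}
  have hSgeN : Sge ⊆ {l | l.Nodup} := fun l hl =>
    ((hpw l hl.1).imp (fun h => ne_of_lt h))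
  have hSgtN : ∀ k, Sgt k ⊆ {l | l.Nodup} := fun k l hl =>
    ((hpw l hl.1).imp (fun h => ne_of_lt h))
  have hfinge : Sge.Finite := hndset.subset hSgeN
  have hfingt : ∀ k, (Sgt k).Finite := fun k => hndset.subset (hSgtN k)
  have hfinT : T.Finite := hfinge.subset (fun l hl => hl.1)
  -- split
  have hunion : Sge = Sgt j ∪ T := by
    ext l
    constructor
    · intro hl
      by_cases hi : i ∈ l.tail
      · exact Or.inr ⟨hl, hi⟩
      · refine Or.inl ⟨hl.1, hl.2.1, hl.2.2.1, fun t ht => ?_⟩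
        rcases lt_or_eq_of_le (hl.2.2.2 t ht) with h | h
        · exact h
        · exact absurd (h ▸ ht) hi
    · rintro (hl | hl)
      · exact ⟨hl.1, hl.2.1, hl.2.2.1, fun t ht => (hl.2.2.2 t ht).le⟩
      · exact hl.1
  have hdisj : Disjoint (Sgt j) T := by
    rw [Set.disjoint_left]
    rintro l hl ⟨_, hi⟩
    exact lt_irrefl i (hl.2.2.2 i hi)
  -- the sum over T
  have hT : ∑ᶠ l ∈ T, pathWeight c l = if A j i then c i j * vb i else 0 := by
    by_cases hAji : A j i
    · -- bijection l' ↦ j :: l' from Sgt i to T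
      have hbij : (Sgt i).BijOn (fun l' => j :: l') T := by
        refine ⟨?_, fun a _ b _ h => by simpa using h, ?_⟩
        · rintro l' ⟨hc, hh, hlast, htail⟩
          obtain ⟨t', rfl⟩ : ∃ t', l' = i :: t' := by
            cases l' with
            | nil => simp at hh
            | cons a t => exact ⟨t, by simp_all⟩
          refine ⟨⟨?_, rfl, ?_, ?_⟩, by simp⟩
          · exact List.IsChain.cons_cons hAji hc
          · simpa [List.getLast?_cons_cons] using hlast
          · intro t ht
            simp only [List.tail_cons] at ht
            rcases List.mem_cons.mp ht with h | h
            · exact le_of_eq (h ▸ rfl)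
            · exact (htail t (by simpa using h)).le
        · rintro l ⟨⟨hc, hh, hlast, htail⟩, hi⟩
          obtain ⟨rest, rfl⟩ : ∃ rest, l = j :: rest := by
            cases l with
            | nil => simp at hh
            | cons a t => exact ⟨t, by simp_all⟩
          simp only [List.tail_cons] at htail hi
          obtain ⟨rest2, rfl⟩ : ∃ rest2, rest = i :: rest2 := by
            cases rest with
            | nil => simp at hi
            | cons b rest2 =>
              rcases List.mem_cons.mp hi with h | h
              · exact ⟨rest2, by rw [h]⟩
                -- h : i = b
              · exfalso
                have hbi : b < i := by
                  have := hpw _ hc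
                  exact (List.pairwise_cons.mp ((List.pairwise_cons.mp this).2)).1 i h
                exact absurd (htail b (by simp)) (not_le.mpr hbi)
          refine ⟨i :: rest2, ⟨(List.isChain_cons_cons.mp hc).2, rfl, ?_, ?_⟩, rfl⟩
          · simpa [List.getLast?_cons_cons] using hlast
          · intro t ht
            simp only [List.tail_cons] at ht
            have := hpw _ hc
            exact (List.pairwise_cons.mp ((List.pairwise_cons.mp this).2)).1 t ht
      have key : ∑ᶠ l' ∈ Sgt i, (c i j * pathWeight c l') = ∑ᶠ l ∈ T, pathWeight c l := by
        refine finsum_mem_eq_of_bijOn _ hbij ?_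
        rintro l' ⟨hc, hh, _, _⟩
        obtain ⟨t', rfl⟩ : ∃ t', l' = i :: t' := by
          cases l' with
          | nil => simp at hh
          | cons a t => exact ⟨t, by simp_all⟩
        exact (pathWeight_cons_cons_s19 c j i t').symm
      rw [if_pos hAji, ← key]
      rw [← (hfingt i).coe_toFinset, finsum_mem_coe_finset, ← Finset.mul_sum]
      congr 1
      rw [hinv i le_rfl, ← finsum_mem_coe_finset, (hfingt i).coe_toFinset]
      rfl
    · rw [if_neg hAji]
      have : T = ∅ := by
        ext l
        simp only [Set.mem_empty_iff_false, iff_false]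
        rintro ⟨⟨hc, hh, _, htail⟩, hi⟩
        obtain ⟨rest, rfl⟩ : ∃ rest, l = j :: rest := by
          cases l with
          | nil => simp at hh
          | cons a t => exact ⟨t, by simp_all⟩
        simp only [List.tail_cons] at htail hi
        obtain ⟨rest2, rfl⟩ : ∃ rest2, rest = i :: rest2 := by
          cases rest with
          | nil => simp at hi
          | cons b rest2 =>
            rcases List.mem_cons.mp hi with h | h
            · exact ⟨rest2, by rw [h]⟩
                -- h : i = b
            · exfalso
              have hbi : b < i := by
                have := hpw _ hc
                exact (List.pairwise_cons.mp ((List.pairwise_cons.mp this).2)).1 i h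
              exact absurd (htail b (by simp)) (not_le.mpr hbi)
        exact hAji (List.isChain_cons_cons.mp hc).1
      rw [this, finsum_mem_empty]
  -- put everything together
  have goal_eq : ∑ᶠ (l : List (Fin (N+1)))
      (_ : l.Chain' A ∧ l.head? = some j ∧ l.getLast? = some (Fin.last N)
        ∧ ∀ t ∈ l.tail, i ≤ t), pathWeight c l = ∑ᶠ l ∈ Sge, pathWeight c l := rfl
  rw [goal_eq, hunion, finsum_mem_union hdisj (hfingt j) hfinT, hT, hvb' j]
  congr 1
  rw [hinv j hj.le]
  rfl
end
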